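/- Let H be a symmetric n×n real matrix, ε > 0, g ∈ ℝⁿ with g ≠ 0, and ζ̂ ∈ (0, 1/6]. Suppose d ∈ ℝⁿ satisfies dᵀ(H + 2εI)d ≥ ε‖d‖², and let r̂ = (H + 2εI)d + g. If ‖r̂‖ ≤ ζ̂‖g‖ and gᵀr̂ = 0, then ‖d‖ ≤ 1.1·ε⁻¹·‖g‖. -/

import Mathlib

open RealInnerProductSpace

/-- Bound (16b) on the SOL output of Capped CG:
`‖d‖ ≤ 1.1 ε⁻¹ ‖g‖`. -/
theorem stmt12
    {n : ℕ} (H : EuclideanSpace ℝ (Fin n) →L[ℝ] EuclideanSpace ℝ (Fin n))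
    (hsym : ∀ x y : EuclideanSpace ℝ (Fin n), ⟪H x, y⟫ = ⟪x, H y⟫)
    (ε ζhat : ℝ) (hε : 0 < ε) (hζhat : ζhat ∈ Set.Ioc (0:ℝ) (1/6))
    (g d rhat : EuclideanSpace ℝ (Fin n)) (hg : g ≠ 0)
    (hcurv : ⟪d, H d + (2*ε) • d⟫ ≥ ε * ‖d‖^2)
    (hrhat : rhat = H d + (2*ε) • d + g)
    (hres : ‖rhat‖ ≤ ζhat * ‖g‖)
    (horth : ⟪g, rhat⟫ = 0) :
    ‖d‖ ≤ 1.1 * ε⁻¹ * ‖g‖ := by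
  obtain ⟨hζ0, hζ1⟩ := hζhat
  have hgpos : 0 < ‖g‖ := norm_pos_iff.mpr hg
  by_cases hd : d = 0
  · subst hd
    simp only [norm_zero]
    positivity
  have hdpos : 0 < ‖d‖ := norm_pos_iff.mpr hd
  -- r̂ - g = H d + 2ε d
  have hdiff : rhat - g = H d + (2*ε) • d := by rw [hrhat]; abel
  -- curvature bound: ε‖d‖² ≤ ⟪d, r̂ - g⟫ ≤ ‖d‖ ‖r̂ - g‖
  have h1 : ε * ‖d‖^2 ≤ ‖d‖ * ‖rhat - g‖ := by
    calc ε * ‖d‖^2 ≤ ⟪d, H d + (2*ε) • d⟫ := hcurv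
      _ = ⟪d, rhat - g⟫ := by rw [hdiff]
      _ ≤ ‖d‖ * ‖rhat - g‖ := real_inner_le_norm _ _
  have h2 : ε * ‖d‖ ≤ ‖rhat - g‖ := by
    have := mul_le_mul_of_nonneg_left h1 (le_of_lt (inv_pos.mpr hdpos))
    calc ε * ‖d‖ = ‖d‖⁻¹ * (ε * ‖d‖^2) := by field_simp
      _ ≤ ‖d‖⁻¹ * (‖d‖ * ‖rhat - g‖) := this
      _ = ‖rhat - g‖ := by field_simp
  -- orthogonality: ‖r̂ - g‖² = ‖r̂‖² + ‖g‖²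
  have h3 : ‖rhat - g‖^2 = ‖rhat‖^2 + ‖g‖^2 := by
    have : ⟪rhat, g⟫ = 0 := by rw [real_inner_comm]; exact horth
    rw [norm_sub_sq_real, this]; ring
  have hrb : ‖rhat‖ ≤ (1/6) * ‖g‖ :=
    hres.trans (mul_le_mul_of_nonneg_right hζ1 hgpos.le)
  have h4 : ‖rhat - g‖^2 ≤ (1.1 * ‖g‖)^2 := by
    rw [h3]
    have : ‖rhat‖^2 ≤ ((1/6) * ‖g‖)^2 := by
      apply sq_le_sq' _ hrb
      linarith [norm_nonneg rhat]
    nlinarith [sq_nonneg ‖g‖]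
  have h5 : ‖rhat - g‖ ≤ 1.1 * ‖g‖ := by
    have h11 : (0:ℝ) ≤ 1.1 * ‖g‖ := by positivity
    nlinarith [norm_nonneg (rhat - g)]
  have h6 : ε * ‖d‖ ≤ 1.1 * ‖g‖ := h2.trans h5
  calc ‖d‖ = ε⁻¹ * (ε * ‖d‖) := by field_simp
    _ ≤ ε⁻¹ * (1.1 * ‖g‖) := by
        exact mul_le_mul_of_nonneg_left h6 (inv_pos.mpr hε).le
    _ = 1.1 * ε⁻¹ * ‖g‖ := by ring
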